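/- arXiv:1802.04963 — 2 statements merged into one kernel-verified Lean document; each statement's English description precedes it below -/
import Mathlib

section
/- Let T be a triangle with edges e_k of length ℓ_k and unit tangents t_k (counterclockwise), and let w be a quadratic polynomial on ℝ². If I_h w denotes the affine (linear) interpolant of w at the three vertices of T, then w − I_h w = −(1/2) ∑_{k=1}^{3} ℓ_k² φ_k ∂_{t_k}² w, where φ_k = λ_{k−1} λ_{k+1} and ∂_{t_k}² w is the (constant) second tangential derivative of w along e_k. -/
/-- Hierarchical error representation of the linear interpolant of a quadratic polynomial:
`w − I_h w = −(1/2) ∑_k ℓ_k² φ_k ∂_{t_k}² w`, where `φ_k = λ_{k−1} λ_{k+1}` and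
`∂_{t_k}² w = 2 B t_k t_k` for `w x = c + b x + B x x`. -/
theorem quadratic_minus_linear_interpolant
    (z : Fin 3 → EuclideanSpace ℝ (Fin 2)) (hz : AffineIndependent ℝ z)
    (lam : Fin 3 → (EuclideanSpace ℝ (Fin 2) →ᵃ[ℝ] ℝ))
    (hlam : ∀ i j, lam i (z j) = if i = j then 1 else 0)
    (ℓ : Fin 3 → ℝ) (hℓ : ∀ j, ℓ j = dist (z (j + 1)) (z (j - 1)))
    (t : Fin 3 → EuclideanSpace ℝ (Fin 2))
    (ht : ∀ j, t j = ‖z (j - 1) - z (j + 1)‖⁻¹ • (z (j - 1) - z (j + 1)))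
    (c : ℝ) (b : EuclideanSpace ℝ (Fin 2) →ₗ[ℝ] ℝ)
    (B : EuclideanSpace ℝ (Fin 2) →ₗ[ℝ] EuclideanSpace ℝ (Fin 2) →ₗ[ℝ] ℝ)
    (w : EuclideanSpace ℝ (Fin 2) → ℝ) (hw : ∀ x, w x = c + b x + B x x)
    (Ihw : EuclideanSpace ℝ (Fin 2) →ᵃ[ℝ] ℝ)
    (hI : ∀ i, Ihw (z i) = w (z i))
    (x : EuclideanSpace ℝ (Fin 2)) :
    w x - Ihw x =
      -(1 / 2) * ∑ k : Fin 3,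
        (ℓ k) ^ 2 * (lam (k - 1) x * lam (k + 1) x) * (2 * B (t k) (t k)) := by
  -- the points form an affine basis
  have htop : affineSpan ℝ (Set.range z) = ⊤ := by
    rw [hz.affineSpan_eq_top_iff_card_eq_finrank_add_one]
    simp [finrank_euclideanSpace_fin]
  let bs : AffineBasis (Fin 3) ℝ (EuclideanSpace ℝ (Fin 2)) := ⟨z, hz, htop⟩
  have hbs : ∀ i, bs i = z i := fun i => rfl
  have hs1 : ∑ j, bs.coord j x = 1 := bs.sum_coord_apply_eq_one x
  have hx : Finset.univ.affineCombination ℝ z (fun j => bs.coord j x) = x := by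
    simpa [hbs] using bs.affineCombination_coord_eq_self x
  -- lam agrees with the barycentric coordinates at x
  have hlamx : ∀ i, lam i x = bs.coord i x := by
    intro i
    conv_lhs => rw [← hx]
    rw [Finset.map_affineCombination _ _ _ hs1,
      Finset.univ.affineCombination_eq_linear_combination _ _ hs1]
    simp [hlam, Fin.sum_univ_three]
  -- Ihw at x
  have hIx : Ihw x = ∑ j, bs.coord j x • w (z j) := by
    conv_lhs => rw [← hx]
    rw [Finset.map_affineCombination _ _ _ hs1,
      Finset.univ.affineCombination_eq_linear_combination _ _ hs1]
    simp [hI]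
  -- x as a linear combination
  have hxv : x = ∑ j, bs.coord j x • z j := by
    have := bs.linear_combination_coord_eq_self x
    simp only [hbs] at this
    exact this.symm
  -- edge vectors
  have hne : ∀ k : Fin 3, z (k - 1) ≠ z (k + 1) := by
    have hk : ∀ k : Fin 3, (k - 1 : Fin 3) ≠ k + 1 := by decide
    intro k h
    exact hk k (hz.injective h)
  have hedge : ∀ k : Fin 3, (ℓ k) ^ 2 * (lam (k - 1) x * lam (k + 1) x) * (2 * B (t k) (t k))
      = (lam (k - 1) x * lam (k + 1) x) *
        (2 * B (z (k - 1) - z (k + 1)) (z (k - 1) - z (k + 1))) := by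
    intro k
    have hd : ‖z (k - 1) - z (k + 1)‖ ≠ 0 := by
      simpa [sub_eq_zero] using hne k
    rw [ht k, hℓ k, dist_eq_norm, ← norm_neg (z (k + 1) - z (k - 1)), neg_sub]
    rw [map_smul, map_smul]
    simp only [smul_eq_mul, LinearMap.smul_apply, smul_eq_mul]
    field_simp
  rw [hw x, hIx]
  simp only [hedge]
  simp only [hlamx]
  -- expand everything
  set μ : Fin 3 → ℝ := fun j => bs.coord j x with hμ
  have hs1' : μ 0 + μ 1 + μ 2 = 1 := by
    rw [← hs1, Fin.sum_univ_three]
  have hbx : b x = μ 0 * b (z 0) + μ 1 * b (z 1) + μ 2 * b (z 2) := by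
    conv_lhs => rw [hxv]
    simp [Fin.sum_univ_three, μ]
  have hBx : B x x =
      μ 0 * μ 0 * B (z 0) (z 0) + μ 0 * μ 1 * B (z 0) (z 1) + μ 0 * μ 2 * B (z 0) (z 2) +
      μ 1 * μ 0 * B (z 1) (z 0) + μ 1 * μ 1 * B (z 1) (z 1) + μ 1 * μ 2 * B (z 1) (z 2) +
      μ 2 * μ 0 * B (z 2) (z 0) + μ 2 * μ 1 * B (z 2) (z 1) + μ 2 * μ 2 * B (z 2) (z 2) := by
    conv_lhs => rw [hxv]
    simp [Fin.sum_univ_three, μ, mul_assoc]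
    ring
  have h01 : (0 - 1 : Fin 3) = 2 := by decide
  have h02 : (0 + 1 : Fin 3) = 1 := by decide
  have h11 : (1 - 1 : Fin 3) = 0 := by decide
  have h12 : (1 + 1 : Fin 3) = 2 := by decide
  have h21 : (2 - 1 : Fin 3) = 1 := by decide
  have h22 : (2 + 1 : Fin 3) = 0 := by decide
  simp only [Fin.sum_univ_three, h01, h02, h11, h12, h21, h22, hw, hbx, hBx, smul_eq_mul,
    map_sub, LinearMap.sub_apply]
  linear_combination (μ 0 * B (z 0) (z 0) + μ 1 * B (z 1) (z 1) + μ 2 * B (z 2) (z 2) - c) * hs1'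
end

section
/- Let T be a nondegenerate triangle with area |T|, edges e_k of length ℓ_k, angles θ_k opposite e_k, and unit tangents t_k. For any quadratic polynomial w on ℝ², Δw = (1/(4|T|²)) ∑_{k=1}^{3} ℓ_k² ℓ_{k−1} ℓ_{k+1} cos θ_k · ∂_{t_k}² w. -/
open EuclideanGeometry MeasureTheory Pointwise

section LaplaceAuxWrap

section LaplaceAux

/-- the standard closed triangle in the plane -/
def laplaceS : Set (EuclideanSpace ℝ (Fin 2)) := {x | 0 ≤ x 0 ∧ 0 ≤ x 1 ∧ x 0 + x 1 ≤ 1}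

/-- the standard closed triangle in `ℝ × ℝ` -/
def laplaceT2 : Set (ℝ × ℝ) := {p | 0 ≤ p.1 ∧ 0 ≤ p.2 ∧ p.1 + p.2 ≤ 1}

lemma laplaceT2_closed : IsClosed laplaceT2 := by
  have h1 : IsClosed {p : ℝ × ℝ | 0 ≤ p.1} := isClosed_le continuous_const continuous_fst
  have h2 : IsClosed {p : ℝ × ℝ | 0 ≤ p.2} := isClosed_le continuous_const continuous_snd
  have h3 : IsClosed {p : ℝ × ℝ | p.1 + p.2 ≤ 1} :=
    isClosed_le (continuous_fst.add continuous_snd) continuous_const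
  exact h1.inter (h2.inter h3)

lemma laplace_volT2 : volume laplaceT2 = ENNReal.ofReal (1/2) := by
  have hmeas : MeasurableSet laplaceT2 := laplaceT2_closed.measurableSet
  rw [show (volume : Measure (ℝ × ℝ)) = (volume : Measure ℝ).prod volume from rfl]
  rw [Measure.prod_apply hmeas]
  have hslice : ∀ x : ℝ, volume (Prod.mk x ⁻¹' laplaceT2) =
      Set.indicator (Set.Icc (0:ℝ) 1) (fun x => ENNReal.ofReal (1 - x)) x := by
    intro x
    by_cases hx : x ∈ Set.Icc (0:ℝ) 1
    · rw [Set.indicator_of_mem hx]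
      have : Prod.mk x ⁻¹' laplaceT2 = Set.Icc 0 (1 - x) := by
        ext y
        simp only [laplaceT2, Set.mem_preimage, Set.mem_setOf_eq, Set.mem_Icc]
        constructor
        · rintro ⟨_, hy, hxy⟩; exact ⟨hy, by linarith⟩
        · rintro ⟨hy, hxy⟩; exact ⟨hx.1, hy, by linarith⟩
      rw [this, Real.volume_Icc]; ring_nf
    · rw [Set.indicator_of_notMem hx]
      have : Prod.mk x ⁻¹' laplaceT2 = ∅ := by
        ext y
        simp only [laplaceT2, Set.mem_preimage, Set.mem_setOf_eq, Set.mem_empty_iff_false,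
          iff_false]
        rintro ⟨h1, h2, h3⟩
        have : ¬ (0 ≤ x ∧ x ≤ 1) := by simpa [Set.mem_Icc] using hx
        rcases not_and_or.mp this with h | h
        · exact h h1
        · exact h (by linarith)
      simp [this]
  simp_rw [hslice]
  rw [lintegral_indicator measurableSet_Icc]
  rw [← ofReal_integral_eq_lintegral_ofReal]
  · congr 1
    rw [MeasureTheory.integral_Icc_eq_integral_Ioc,
      ← intervalIntegral.integral_of_le (by norm_num : (0:ℝ) ≤ 1)]
    simp [intervalIntegral.integral_sub intervalIntegrable_const
      intervalIntegral.intervalIntegrable_id]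
    norm_num
  · exact ContinuousOn.integrableOn_compact isCompact_Icc
      ((continuous_const.sub continuous_id).continuousOn)
  · filter_upwards [ae_restrict_mem measurableSet_Icc] with x hx
    simp only [Set.mem_Icc] at hx
    simp only [Pi.zero_apply]
    linarith [hx.2]

lemma laplace_volS : volume laplaceS = ENNReal.ofReal (1/2) := by
  have hT2 : MeasurableSet laplaceT2 := laplaceT2_closed.measurableSet
  have e1 := EuclideanSpace.volume_preserving_symm_measurableEquiv_toLp (Fin 2)
  have e2 := volume_preserving_finTwoArrow ℝ
  have hS : laplaceS = (MeasurableEquiv.toLp 2 (Fin 2 → ℝ)).symm ⁻¹'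
      (MeasurableEquiv.finTwoArrow ⁻¹' laplaceT2) := rfl
  rw [hS, e1.measure_preimage, e2.measure_preimage, laplace_volT2]
  · exact hT2.nullMeasurableSet
  · exact (e2.measurable hT2).nullMeasurableSet

lemma laplace_hullS :
    convexHull ℝ ({0, EuclideanSpace.single 0 (1:ℝ), EuclideanSpace.single 1 (1:ℝ)} :
      Set (EuclideanSpace ℝ (Fin 2))) = laplaceS := by
  apply Set.Subset.antisymm
  · apply convexHull_min
    · intro x hx
      rcases hx with h | h | h <;> subst h <;>
        simp [laplaceS, EuclideanSpace.single_apply]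
    · intro x hx y hy a b ha hb hab
      simp only [laplaceS, Set.mem_setOf_eq, PiLp.add_apply, PiLp.smul_apply, smul_eq_mul] at *
      obtain ⟨hx0, hx1, hx2⟩ := hx
      obtain ⟨hy0, hy1, hy2⟩ := hy
      refine ⟨by nlinarith, by nlinarith, by nlinarith⟩
  · intro x hx
    obtain ⟨h0, h1, hs⟩ := hx
    have hdecomp : x = (1 - x 0 - x 1) • (0 : EuclideanSpace ℝ (Fin 2)) +
        x 0 • EuclideanSpace.single 0 (1:ℝ) + x 1 • EuclideanSpace.single 1 (1:ℝ) := by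
      ext i
      fin_cases i <;> simp [EuclideanSpace.single_apply]
    rw [hdecomp]
    have := (convex_convexHull ℝ ({0, EuclideanSpace.single 0 (1:ℝ),
        EuclideanSpace.single 1 (1:ℝ)} : Set (EuclideanSpace ℝ (Fin 2)))).sum_mem
      (t := (Finset.univ : Finset (Fin 3))) (w := ![1 - x 0 - x 1, x 0, x 1])
      (z := ![0, EuclideanSpace.single 0 (1:ℝ), EuclideanSpace.single 1 (1:ℝ)]) ?_ ?_ ?_
    · simpa [Fin.sum_univ_three] using this
    · intro i _
      fin_cases i <;> simp <;> linarith
    · simp [Fin.sum_univ_three]; ring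
    · intro i _
      fin_cases i <;> exact subset_convexHull ℝ _ (by simp)

noncomputable def laplaceLmap (u v : EuclideanSpace ℝ (Fin 2)) :
    EuclideanSpace ℝ (Fin 2) →ₗ[ℝ] EuclideanSpace ℝ (Fin 2) where
  toFun x := x 0 • u + x 1 • v
  map_add' x y := by
    simp only [PiLp.add_apply]
    rw [add_smul, add_smul]; abel
  map_smul' c x := by
    simp only [PiLp.smul_apply, smul_eq_mul, RingHom.id_apply, smul_add, smul_smul]

lemma laplaceLmap_apply (u v x : EuclideanSpace ℝ (Fin 2)) :
    laplaceLmap u v x = x 0 • u + x 1 • v := rfl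

lemma laplaceLmap_det (u v : EuclideanSpace ℝ (Fin 2)) :
    LinearMap.det (laplaceLmap u v) = u 0 * v 1 - u 1 * v 0 := by
  rw [← LinearMap.det_toMatrix (PiLp.basisFun 2 ℝ (Fin 2)), Matrix.det_fin_two]
  simp [LinearMap.toMatrix_apply, PiLp.basisFun_apply, PiLp.basisFun_repr, laplaceLmap_apply,
    PiLp.ofLp_single, EuclideanSpace.single_apply, LinearMap.coe_mk, AddHom.coe_mk]
  ring

lemma laplace_tri_vol (p q r : EuclideanSpace ℝ (Fin 2)) :
    volume (convexHull ℝ ({p, q, r} : Set (EuclideanSpace ℝ (Fin 2)))) =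
      ENNReal.ofReal (|(q - p) 0 * (r - p) 1 - (q - p) 1 * (r - p) 0| / 2) := by
  set u := q - p
  set v := r - p
  have himg : ({p, q, r} : Set (EuclideanSpace ℝ (Fin 2))) =
      (fun x => p + x) '' (laplaceLmap u v ''
        ({0, EuclideanSpace.single 0 (1:ℝ), EuclideanSpace.single 1 (1:ℝ)})) := by
    rw [Set.image_image]
    simp only [Set.image_insert_eq, Set.image_singleton]
    have h0 : laplaceLmap u v 0 = 0 := map_zero _
    have h1 : laplaceLmap u v (EuclideanSpace.single 0 (1:ℝ)) = u := by
      show (EuclideanSpace.single 0 (1:ℝ)) 0 • u + (EuclideanSpace.single 0 (1:ℝ)) 1 • v = u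
      simp [EuclideanSpace.single_apply]
    have h2 : laplaceLmap u v (EuclideanSpace.single 1 (1:ℝ)) = v := by
      show (EuclideanSpace.single 1 (1:ℝ)) 0 • u + (EuclideanSpace.single 1 (1:ℝ)) 1 • v = v
      simp [EuclideanSpace.single_apply]
    rw [h0, h1, h2]
    simp [u, v]
  have hg : ∀ s : Set (EuclideanSpace ℝ (Fin 2)), (fun x => p + x) '' s = p +ᵥ s := by
    intro s; ext y
    simp only [Set.mem_image, Set.mem_vadd_set, vadd_eq_add]
  rw [himg, hg, convexHull_vadd, ← LinearMap.image_convexHull, measure_vadd,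
    Measure.addHaar_image_linearMap, laplace_hullS, laplace_volS, laplaceLmap_det u v,
    ← ENNReal.ofReal_mul (abs_nonneg _)]
  ring_nf

lemma laplace_det_ne (z : Fin 3 → EuclideanSpace ℝ (Fin 2)) (hz : AffineIndependent ℝ z) :
    (z 1 - z 0) 0 * (z 2 - z 0) 1 - (z 1 - z 0) 1 * (z 2 - z 0) 0 ≠ 0 := by
  set u : EuclideanSpace ℝ (Fin 2) := z 1 - z 0 with hu
  set v : EuclideanSpace ℝ (Fin 2) := z 2 - z 0 with hv
  have hli : LinearIndependent ℝ ![u, v] := by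
    have h := (affineIndependent_iff_linearIndependent_vsub ℝ z 0).mp hz
    have h2 := h.comp (![⟨1, by decide⟩, ⟨2, by decide⟩] : Fin 2 → {x : Fin 3 // x ≠ 0})
      (by decide)
    convert h2 using 1
    funext i
    fin_cases i <;> simp [hu, hv, vsub_eq_sub]
    rfl
  rw [Fintype.linearIndependent_iff] at hli
  intro hd
  have key : ∀ s t : ℝ, s * u 0 + t * v 0 = 0 → s * u 1 + t * v 1 = 0 → s = 0 ∧ t = 0 := by
    intro s t h0 h1
    have := hli ![s, t] ?_
    · exact ⟨this 0, this 1⟩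
    · ext i
      fin_cases i <;>
        simpa [Fin.sum_univ_two, PiLp.add_apply, PiLp.smul_apply] using (by assumption : _)
  obtain ⟨hv0, hu0'⟩ := key (v 0) (-(u 0)) (by ring) (by linear_combination -hd)
  obtain ⟨hv1, hu1'⟩ := key (v 1) (-(u 1)) (by linear_combination hd) (by ring)
  have hu0 : u 0 = 0 := by linarith
  have hu1 : u 1 = 0 := by linarith
  obtain ⟨h10, -⟩ := key 1 0 (by simp [hu0]) (by simp [hu1])
  norm_num at h10

variable (B : EuclideanSpace ℝ (Fin 2) →ₗ[ℝ] EuclideanSpace ℝ (Fin 2) →ₗ[ℝ] ℝ)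

lemma laplace_decomp (x : EuclideanSpace ℝ (Fin 2)) :
    x = x 0 • EuclideanSpace.single 0 (1:ℝ) + x 1 • EuclideanSpace.single 1 (1:ℝ) := by
  ext i
  fin_cases i <;> simp [EuclideanSpace.single_apply]

lemma laplace_Bexp (x y : EuclideanSpace ℝ (Fin 2)) :
    B x y = x 0 * y 0 * B (EuclideanSpace.single 0 (1:ℝ)) (EuclideanSpace.single 0 (1:ℝ))
      + x 0 * y 1 * B (EuclideanSpace.single 0 (1:ℝ)) (EuclideanSpace.single 1 (1:ℝ))
      + x 1 * y 0 * B (EuclideanSpace.single 1 (1:ℝ)) (EuclideanSpace.single 0 (1:ℝ))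
      + x 1 * y 1 * B (EuclideanSpace.single 1 (1:ℝ)) (EuclideanSpace.single 1 (1:ℝ)) := by
  conv_lhs => rw [laplace_decomp x, laplace_decomp y]
  simp only [map_add, _root_.map_smul, LinearMap.add_apply, LinearMap.smul_apply, smul_eq_mul]
  ring

lemma laplace_term (p q r : EuclideanSpace ℝ (Fin 2)) (hpq : q ≠ p) (hpr : r ≠ p)
    (hqr : r ≠ q) :
    dist q r ^ 2 * dist p q * dist r p * Real.cos (∠ q p r) *
      (2 * B (‖r - q‖⁻¹ • (r - q)) (‖r - q‖⁻¹ • (r - q))) =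
    2 * (inner ℝ (q - p) (r - p) : ℝ) * B (r - q) (r - q) := by
  have ha : ‖r - q‖ ≠ 0 := norm_ne_zero_iff.mpr (sub_ne_zero.mpr hqr)
  have hb : ‖q - p‖ ≠ 0 := norm_ne_zero_iff.mpr (sub_ne_zero.mpr hpq)
  have hc : ‖r - p‖ ≠ 0 := norm_ne_zero_iff.mpr (sub_ne_zero.mpr hpr)
  have hang : ∠ q p r = InnerProductGeometry.angle (q - p) (r - p) := rfl
  rw [hang, InnerProductGeometry.cos_angle]
  rw [show dist q r = ‖r - q‖ by rw [dist_eq_norm, norm_sub_rev],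
    show dist p q = ‖q - p‖ by rw [dist_eq_norm, norm_sub_rev],
    show dist r p = ‖r - p‖ by rw [dist_eq_norm]]
  simp only [_root_.map_smul, LinearMap.smul_apply, smul_eq_mul]
  field_simp

lemma laplace_inner_eq (x y : EuclideanSpace ℝ (Fin 2)) :
    (inner ℝ x y : ℝ) = x 0 * y 0 + x 1 * y 1 := by
  simp [PiLp.inner_apply, Fin.sum_univ_two]
  ring

end LaplaceAux


/-- Laplacian of a quadratic polynomial in terms of second tangential derivatives:
`Δw = (1/(4|T|²)) ∑_k ℓ_k² ℓ_{k−1} ℓ_{k+1} cos θ_k ∂_{t_k}² w`, where for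
`w x = c + b x + B x x` one has `Δw = 2 B e₀ e₀ + 2 B e₁ e₁` and `∂_{t_k}² w = 2 B t_k t_k`. -/
theorem laplacian_quadratic_tangential_representation
    (z : Fin 3 → EuclideanSpace ℝ (Fin 2)) (hz : AffineIndependent ℝ z)
    (ℓ θ : Fin 3 → ℝ)
    (hℓ : ∀ j, ℓ j = dist (z (j + 1)) (z (j - 1)))
    (hθ : ∀ j, θ j = ∠ (z (j + 1)) (z j) (z (j - 1)))
    (t : Fin 3 → EuclideanSpace ℝ (Fin 2))
    (ht : ∀ j, t j = ‖z (j - 1) - z (j + 1)‖⁻¹ • (z (j - 1) - z (j + 1)))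
    (area : ℝ)
    (harea : area = (volume (convexHull ℝ ({z 0, z 1, z 2} :
      Set (EuclideanSpace ℝ (Fin 2))))).toReal)
    (c : ℝ) (b : EuclideanSpace ℝ (Fin 2) →ₗ[ℝ] ℝ)
    (B : EuclideanSpace ℝ (Fin 2) →ₗ[ℝ] EuclideanSpace ℝ (Fin 2) →ₗ[ℝ] ℝ)
    (w : EuclideanSpace ℝ (Fin 2) → ℝ) (hw : ∀ x, w x = c + b x + B x x) :
    2 * B (EuclideanSpace.single 0 (1:ℝ)) (EuclideanSpace.single 0 (1:ℝ)) +
      2 * B (EuclideanSpace.single 1 (1:ℝ)) (EuclideanSpace.single 1 (1:ℝ)) =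
      1 / (4 * area ^ 2) * ∑ k : Fin 3,
        (ℓ k) ^ 2 * ℓ (k - 1) * ℓ (k + 1) * Real.cos (θ k) * (2 * B (t k) (t k)) := by
  -- distinctness of the vertices
  have h10 : z 1 ≠ z 0 := hz.injective.ne (by decide)
  have h20 : z 2 ≠ z 0 := hz.injective.ne (by decide)
  have h21 : z 2 ≠ z 1 := hz.injective.ne (by decide)
  have h01 : z 0 ≠ z 1 := hz.injective.ne (by decide)
  have h02 : z 0 ≠ z 2 := hz.injective.ne (by decide)
  have h12 : z 1 ≠ z 2 := hz.injective.ne (by decide)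
  -- the determinant
  have hD : (z 1 - z 0) 0 * (z 2 - z 0) 1 - (z 1 - z 0) 1 * (z 2 - z 0) 0 ≠ 0 :=
    laplace_det_ne z hz
  set D : ℝ := (z 1 - z 0) 0 * (z 2 - z 0) 1 - (z 1 - z 0) 1 * (z 2 - z 0) 0 with hDdef
  have hA : area = |D| / 2 := by
    rw [harea, laplace_tri_vol (z 0) (z 1) (z 2),
      ENNReal.toReal_ofReal (by positivity : (0:ℝ) ≤ |D| / 2)]
  have h4 : 4 * area ^ 2 = D ^ 2 := by
    rw [hA, div_pow, sq_abs]; ring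
  -- specialize the data
  have hl0 : ℓ 0 = dist (z 1) (z 2) := hℓ 0
  have hl1 : ℓ 1 = dist (z 2) (z 0) := hℓ 1
  have hl2 : ℓ 2 = dist (z 0) (z 1) := hℓ 2
  have hth0 : θ 0 = ∠ (z 1) (z 0) (z 2) := hθ 0
  have hth1 : θ 1 = ∠ (z 2) (z 1) (z 0) := hθ 1
  have hth2 : θ 2 = ∠ (z 0) (z 2) (z 1) := hθ 2
  have ht0 : t 0 = ‖z 2 - z 1‖⁻¹ • (z 2 - z 1) := ht 0
  have ht1 : t 1 = ‖z 0 - z 2‖⁻¹ • (z 0 - z 2) := ht 1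
  have ht2 : t 2 = ‖z 1 - z 0‖⁻¹ • (z 1 - z 0) := ht 2
  rw [Fin.sum_univ_three]
  simp only [show (0:Fin 3) - 1 = 2 from rfl, show (0:Fin 3) + 1 = 1 from rfl,
    show (1:Fin 3) - 1 = 0 from rfl, show (1:Fin 3) + 1 = 2 from rfl,
    show (2:Fin 3) - 1 = 1 from rfl, show (2:Fin 3) + 1 = 0 from rfl]
  rw [hl0, hl1, hl2, hth0, hth1, hth2, ht0, ht1, ht2]
  rw [laplace_term B (z 0) (z 1) (z 2) h10 h20 h21,
    laplace_term B (z 1) (z 2) (z 0) h21 h01 h02,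
    laplace_term B (z 2) (z 0) (z 1) h02 h12 h10]
  rw [h4, one_div, inv_mul_eq_div, eq_div_iff (pow_ne_zero 2 hD)]
  rw [laplace_Bexp B (z 2 - z 1) (z 2 - z 1), laplace_Bexp B (z 0 - z 2) (z 0 - z 2),
    laplace_Bexp B (z 1 - z 0) (z 1 - z 0), laplace_inner_eq, laplace_inner_eq,
    laplace_inner_eq, hDdef]
  simp only [PiLp.sub_apply]
  ring

end LaplaceAuxWrap
end
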